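/- Let Alt_1 be the logic of all pointed frames in which every world has at most one R-successor. Let σ be a signature, τ ⊆ σ, and φ ∈ ML(σ) of modal depth n. For i ∈ ℕ define tr_i : ML(σ) → PL(σ×ℕ) by tr_i(p) = p_i (where p_j denotes the atom (p,j)), tr_i commutes with ¬ and ∧, tr_0(□χ) = ⊤, and tr_i(□χ) = tr_{i-1}(χ) for i > 0. Suppose that for each 0 ≤ i ≤ n, ψ_i is a uniform propositional (τ×{0,…,i})-interpolant for tr_i(φ). Then the modal formula ψ := ⋀_{0≤i≤n-1} (◇^i□⊥ → ψ_i[p_j ↦ ◇^{i-j} p]) ∧ (◇^n⊤ → ψ_n[p_j ↦ ◇^{n-j} p]) is a uniform Alt_1(τ)-interpolant for φ, where ψ_i[p_j ↦ ◇^{i-j} p] is the result of substituting, for each atom p_j occurring in ψ_i, the modal formula ◇^{i-j} p. -/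

import Mathlib

inductive MForm (α : Type) : Type
  | top : MForm α
  | atom : α → MForm α
  | neg : MForm α → MForm α
  | and : MForm α → MForm α → MForm α
  | box : MForm α → MForm α
deriving DecidableEq

namespace MForm

def imp {α : Type} (φ ψ : MForm α) : MForm α := neg (and φ (neg ψ))

def dia {α : Type} (φ : MForm α) : MForm α := neg (box (neg φ))

def sig {α : Type} [DecidableEq α] : MForm α → Finset α
  | top => ∅
  | atom p => {p}
  | neg φ => sig φ
  | and φ ψ => sig φ ∪ sig ψ
  | box φ => sig φ

def IsProp {α : Type} : MForm α → Prop
  | top => True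
  | atom _ => True
  | neg φ => IsProp φ
  | and φ ψ => IsProp φ ∧ IsProp ψ
  | box _ => False

def subf {α : Type} [DecidableEq α] : MForm α → Finset (MForm α)
  | top => {top}
  | atom p => {atom p}
  | neg φ => insert (neg φ) (subf φ)
  | and φ ψ => insert (and φ ψ) (subf φ ∪ subf ψ)
  | box φ => insert (box φ) (subf φ)

/-- The dag-size of a formula: the number of its distinct subformulas. -/
def dagSize {α : Type} [DecidableEq α] (φ : MForm α) : ℕ := (subf φ).card

end MForm

def psat {α : Type} (v : α → Prop) : MForm α → Prop
  | .top => True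
  | .atom p => v p
  | .neg φ => ¬ psat v φ
  | .and φ ψ => psat v φ ∧ psat v ψ
  | .box _ => True

/-- Propositional tautology. -/
def PTaut {α : Type} (φ : MForm α) : Prop := ∀ v : α → Prop, psat v φ

def bigAnd {α : Type} : List (MForm α) → MForm α
  | [] => .top
  | φ :: l => .and φ (bigAnd l)

def bigOr {α : Type} (l : List (MForm α)) : MForm α := .neg (bigAnd (l.map .neg))

def boxIter {α : Type} : ℕ → MForm α → MForm α
  | 0, φ => φ
  | n + 1, φ => .box (boxIter n φ)

def diaIter {α : Type} : ℕ → MForm α → MForm α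
  | 0, φ => φ
  | n + 1, φ => MForm.dia (diaIter n φ)

/-- `□^{≤n} φ`. -/
def ble {α : Type} (n : ℕ) (φ : MForm α) : MForm α :=
  bigAnd ((List.range (n + 1)).map (fun k => boxIter k φ))

/-- `◇^{≤n} φ`. -/
def dle {α : Type} (n : ℕ) (φ : MForm α) : MForm α := .neg (ble n (.neg φ))

def substAtoms {α β : Type} (s : α → MForm β) : MForm α → MForm β
  | .top => .top
  | .atom a => s a
  | .neg φ => .neg (substAtoms s φ)
  | .and φ ψ => .and (substAtoms s φ) (substAtoms s ψ)
  | .box φ => .box (substAtoms s φ)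

structure Frame where
  W : Type
  ne : Nonempty W
  R : W → W → Prop

structure PFrame extends Frame where
  pt : W

def sat (F : Frame) (V : F.W → ℕ → Prop) : F.W → MForm ℕ → Prop
  | w, .top => True
  | w, .atom p => V w p
  | w, .neg φ => ¬ sat F V w φ
  | w, .and φ ψ => sat F V w φ ∧ sat F V w ψ
  | w, .box φ => ∀ v, F.R w v → sat F V v φ

def validAt (F : Frame) (w : F.W) (φ : MForm ℕ) : Prop := ∀ V, sat F V w φ

def Log (𝓕 : Set PFrame) : Set (MForm ℕ) := {φ | ∀ P ∈ 𝓕, validAt P.toFrame P.pt φ}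

def Rooted (F : Frame) (w : F.W) : Prop := ∀ v, Relation.ReflTransGen F.R w v

def StrImp (L : Set (MForm ℕ)) (σ : Finset ℕ) (φ χ : MForm ℕ) : Prop :=
  χ.sig ⊆ σ ∧ φ.imp χ ∈ L ∧
    ∀ ψ : MForm ℕ, ψ.sig ⊆ σ → φ.imp ψ ∈ L → χ.imp ψ ∈ L

def UnifInt (L : Set (MForm ℕ)) (σ : Finset ℕ) (φ χ : MForm ℕ) : Prop :=
  χ.sig ⊆ σ ∧ φ.imp χ ∈ L ∧
    ∀ ψ : MForm ℕ, ψ.sig ∩ φ.sig ⊆ σ → φ.imp ψ ∈ L → χ.imp ψ ∈ L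

def CraigInt (L : Set (MForm ℕ)) (φ ψ χ : MForm ℕ) : Prop :=
  φ.imp χ ∈ L ∧ χ.imp ψ ∈ L ∧ χ.sig ⊆ φ.sig ∩ ψ.sig

def HasCIP (L : Set (MForm ℕ)) : Prop :=
  ∀ φ ψ : MForm ℕ, φ.imp ψ ∈ L → ∃ χ, CraigInt L φ ψ χ

def IsBisim (σ : Finset ℕ) (F₁ : Frame) (V₁ : F₁.W → ℕ → Prop)
    (F₂ : Frame) (V₂ : F₂.W → ℕ → Prop) (Z : F₁.W → F₂.W → Prop) : Prop :=
  (∀ w₁ w₂, Z w₁ w₂ → ∀ p ∈ σ, (V₁ w₁ p ↔ V₂ w₂ p)) ∧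
  (∀ w₁ w₂ v₁, Z w₁ w₂ → F₁.R w₁ v₁ → ∃ v₂, F₂.R w₂ v₂ ∧ Z v₁ v₂) ∧
  (∀ w₁ w₂ v₂, Z w₁ w₂ → F₂.R w₂ v₂ → ∃ v₁, F₁.R w₁ v₁ ∧ Z v₁ v₂)

def Bisim (σ : Finset ℕ) (F₁ : Frame) (V₁ : F₁.W → ℕ → Prop) (w₁ : F₁.W)
    (F₂ : Frame) (V₂ : F₂.W → ℕ → Prop) (w₂ : F₂.W) : Prop :=
  ∃ Z, IsBisim σ F₁ V₁ F₂ V₂ Z ∧ Z w₁ w₂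

def IsEME (σ : Finset ℕ) (Φ : Finset (MForm ℕ)) : Prop :=
  (∀ φ ∈ Φ, φ.IsProp ∧ φ.sig ⊆ σ) ∧
  (∀ v : ℕ → Prop, ∃ φ ∈ Φ, psat v φ) ∧
  (∀ φ ∈ Φ, ∀ ψ ∈ Φ, φ ≠ ψ → ∀ v : ℕ → Prop, ¬ (psat v φ ∧ psat v ψ))

def IsCover (σ : Finset ℕ) (Φ : Finset (MForm ℕ)) (F : Frame) (V : F.W → ℕ → Prop) : Prop :=
  ∀ φ ∈ Φ, ∀ w₁ w₂, sat F V w₁ φ → sat F V w₂ φ →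
    ∀ χ : MForm ℕ, χ.IsProp → χ.sig ⊆ σ → (sat F V w₁ χ ↔ sat F V w₂ χ)

noncomputable def coverFml (σ : Finset ℕ) (Φ : Finset (MForm ℕ)) (N : ℕ) : MForm ℕ :=
  bigAnd (Φ.toList.map (fun φ => bigAnd (σ.toList.map (fun p =>
    MForm.imp (dle N (.and φ (.atom p))) (ble N (MForm.imp φ (.atom p)))))))

/-- Alt₁: the logic of all pointed frames in which every world has at most one successor. -/
def Alt1 : Set (MForm ℕ) :=
  {φ | ∀ F : Frame, (∀ w v v' : F.W, F.R w v → F.R w v' → v = v') →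
    ∀ w : F.W, validAt F w φ}

/-- The modal depth of a formula. -/
def MForm.depth {α : Type} : MForm α → ℕ
  | .top => 0
  | .atom _ => 0
  | .neg φ => depth φ
  | .and φ ψ => max (depth φ) (depth ψ)
  | .box φ => depth φ + 1

/-- The translations `tr_i : ML(σ) → PL(σ×ℕ)` for Alt₁: `tr_i(p) = p_i`, commuting with
`¬` and `∧`, `tr_0(□χ) = ⊤` and `tr_i(□χ) = tr_{i-1}(χ)` for `i > 0`. -/
def trAlt : ℕ → MForm ℕ → MForm (ℕ × ℕ)
  | _, .top => .top
  | i, .atom p => .atom (p, i)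
  | i, .neg φ => .neg (trAlt i φ)
  | i, .and φ ψ => .and (trAlt i φ) (trAlt i ψ)
  | 0, .box _ => .top
  | i + 1, .box φ => trAlt i φ

/-- Uniform propositional `σ'`-interpolant. -/
def UPropInt {β : Type} [DecidableEq β] (σ' : Finset β) (χ ξ : MForm β) : Prop :=
  ξ.IsProp ∧ ξ.sig ⊆ σ' ∧ PTaut (χ.imp ξ) ∧
    ∀ ψ : MForm β, ψ.IsProp → ψ.sig ∩ χ.sig ⊆ σ' → PTaut (χ.imp ψ) → PTaut (ξ.imp ψ)

/-- `ψ_i[p_j ↦ ◇^{i-j} p]`. -/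
def backSub (i : ℕ) (ψ : MForm (ℕ × ℕ)) : MForm ℕ :=
  substAtoms (fun pj => diaIter (i - pj.2) (.atom pj.1)) ψ

/-- The candidate uniform Alt₁(τ)-interpolant built from the propositional uniform
interpolants `Ψ 0, …, Ψ n`:
`⋀_{0≤i≤n-1} (◇^i□⊥ → Ψ_i[p_j ↦ ◇^{i-j} p]) ∧ (◇^n⊤ → Ψ_n[p_j ↦ ◇^{n-j} p])`. -/
def altInterpolant (n : ℕ) (Ψ : ℕ → MForm (ℕ × ℕ)) : MForm ℕ :=
  .and
    (bigAnd ((List.range n).map (fun i =>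
      MForm.imp (diaIter i (.box (.neg .top))) (backSub i (Ψ i)))))
    (MForm.imp (diaIter n .top) (backSub n (Ψ n)))


/-! ### Auxiliary lemmas -/

open Classical

section Aux

variable {β : Type}

lemma psat_imp {v : β → Prop} {φ ψ : MForm β} :
    psat v (φ.imp ψ) ↔ (psat v φ → psat v ψ) := by
  simp only [MForm.imp, psat]; tauto

lemma psat_bigAnd {v : β → Prop} {l : List (MForm β)} :
    psat v (bigAnd l) ↔ ∀ φ ∈ l, psat v φ := by
  induction l with
  | nil => simp [bigAnd, psat]
  | cons a l ih => simp [bigAnd, psat, ih]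

lemma psat_congr [DecidableEq β] {v v' : β → Prop} {φ : MForm β}
    (h : ∀ a ∈ φ.sig, v a ↔ v' a) : psat v φ ↔ psat v' φ := by
  induction φ with
  | top => simp [psat]
  | atom p => exact h p (by simp [MForm.sig])
  | neg φ ih => simp only [psat]; rw [ih (fun a ha => h a ha)]
  | and φ ψ ih1 ih2 =>
      simp only [psat]
      rw [ih1 (fun a ha => h a (by simp [MForm.sig]; exact Or.inl ha)),
          ih2 (fun a ha => h a (by simp [MForm.sig]; exact Or.inr ha))]
  | box φ _ => simp [psat]

lemma psat_substAtoms {γ : Type} {v : γ → Prop} (s : β → MForm γ) (φ : MForm β) :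
    psat v (substAtoms s φ) ↔ psat (fun a => psat v (s a)) φ := by
  induction φ with
  | top => simp [substAtoms, psat]
  | atom p => simp [substAtoms, psat]
  | neg φ ih => simp only [substAtoms, psat]; rw [ih]
  | and φ ψ ih1 ih2 => simp only [substAtoms, psat]; rw [ih1, ih2]
  | box φ _ => simp [substAtoms, psat]

lemma substAtoms_pure (φ : MForm β) : substAtoms (fun a => MForm.atom a) φ = φ := by
  induction φ with
  | top => rfl
  | atom p => rfl
  | neg φ ih => simp [substAtoms, ih]
  | and φ ψ ih1 ih2 => simp [substAtoms, ih1, ih2]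
  | box φ ih => simp [substAtoms, ih]

lemma isProp_bigAnd {l : List (MForm β)} (h : ∀ φ ∈ l, MForm.IsProp φ) :
    MForm.IsProp (bigAnd l) := by
  induction l with
  | nil => trivial
  | cons a l ih =>
      exact ⟨h a (by simp), ih (fun φ hφ => h φ (by simp [hφ]))⟩

lemma sig_bigAnd_subset [DecidableEq β] {l : List (MForm β)} {t : Finset β}
    (h : ∀ φ ∈ l, MForm.sig φ ⊆ t) : (bigAnd l).sig ⊆ t := by
  induction l with
  | nil => simp [bigAnd, MForm.sig]
  | cons a l ih =>
      simp only [bigAnd, MForm.sig, Finset.union_subset_iff]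
      exact ⟨h a (by simp), ih (fun φ hφ => h φ (by simp [hφ]))⟩

lemma sig_diaIter [DecidableEq β] (k : ℕ) (φ : MForm β) :
    (diaIter k φ).sig = φ.sig := by
  induction k with
  | zero => rfl
  | succ k ih => simp [diaIter, MForm.dia, MForm.sig, ih]

lemma sat_imp {F : Frame} {V : F.W → ℕ → Prop} {w : F.W} {φ ψ : MForm ℕ} :
    sat F V w (φ.imp ψ) ↔ (sat F V w φ → sat F V w ψ) := by
  simp only [MForm.imp, sat]; tauto

lemma sat_dia {F : Frame} {V : F.W → ℕ → Prop} {w : F.W} {φ : MForm ℕ} :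
    sat F V w (MForm.dia φ) ↔ ∃ x, F.R w x ∧ sat F V x φ := by
  simp only [MForm.dia, sat]
  push_neg
  rfl

lemma sat_bigAnd {F : Frame} {V : F.W → ℕ → Prop} {w : F.W} {l : List (MForm ℕ)} :
    sat F V w (bigAnd l) ↔ ∀ φ ∈ l, sat F V w φ := by
  induction l with
  | nil => simp [bigAnd, sat]
  | cons a l ih => simp [bigAnd, sat, ih]

end Aux


section Aux2

lemma sig_trAlt (α : MForm ℕ) : ∀ i : ℕ, (trAlt i α).sig ⊆ α.sig ×ˢ Finset.range (i + 1) := by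
  induction α with
  | top => intro i; simp [trAlt, MForm.sig]
  | atom p => intro i; simp [trAlt, MForm.sig]
  | neg φ ih => intro i; simpa [trAlt, MForm.sig] using ih i
  | and φ ψ ih1 ih2 =>
      intro i a ha
      simp only [trAlt, MForm.sig, Finset.mem_union] at ha
      rcases ha with h | h
      · have := ih1 i h
        simp only [Finset.mem_product] at this ⊢
        exact ⟨by simp [MForm.sig, this.1], this.2⟩
      · have := ih2 i h
        simp only [Finset.mem_product] at this ⊢
        exact ⟨by simp [MForm.sig, this.1], this.2⟩
  | box φ ih =>
      intro i
      cases i with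
      | zero => simp [trAlt, MForm.sig]
      | succ i =>
          intro a ha
          have := ih i ha
          simp only [Finset.mem_product, Finset.mem_range] at this ⊢
          exact ⟨this.1, by omega⟩

lemma trAlt_shift_depth (α : MForm ℕ) : ∀ i m : ℕ, α.depth ≤ i → i ≤ m →
    trAlt m α = substAtoms (fun a => MForm.atom (a.1, a.2 + (m - i))) (trAlt i α) := by
  induction α with
  | top => intro i m _ _; simp [trAlt, substAtoms]
  | atom p =>
      intro i m _ him
      simp only [trAlt, substAtoms]
      congr 1
      simp [Nat.sub_add_cancel, Nat.add_sub_cancel' him]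
  | neg φ ih =>
      intro i m hd him
      simp only [trAlt, substAtoms]
      rw [ih i m hd him]
  | and φ ψ ih1 ih2 =>
      intro i m hd him
      simp only [MForm.depth, max_le_iff] at hd
      simp only [trAlt, substAtoms]
      rw [ih1 i m hd.1 him, ih2 i m hd.2 him]
  | box φ ih =>
      intro i m hd him
      match i, m with
      | 0, _ => simp [MForm.depth] at hd
      | i + 1, m + 1 =>
          simp only [trAlt]
          have : m + 1 - (i + 1) = m - i := by omega
          rw [this, ih i m (by simpa [MForm.depth] using hd) (by omega)]

lemma trAlt_shift (α : MForm ℕ) (i m : ℕ) (h : i = m ∨ α.depth ≤ i) (him : i ≤ m) :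
    trAlt m α = substAtoms (fun a => MForm.atom (a.1, a.2 + (m - i))) (trAlt i α) := by
  rcases h with rfl | hd
  · have : (fun a : ℕ × ℕ => MForm.atom (a.1, a.2 + (i - i))) = (fun a : ℕ × ℕ => MForm.atom a) := by
      funext a; simp
    rw [this, substAtoms_pure]
  · exact trAlt_shift_depth α i m hd him

/-- The main truth lemma for Alt₁ frames. -/
lemma TL (F : Frame) (hF : ∀ w v v' : F.W, F.R w v → F.R w v' → v = v')
    (V : F.W → ℕ → Prop) (u : ℕ → F.W) (m : ℕ)
    (hu : ∀ k < m, F.R (u k) (u (k + 1))) :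
    ∀ (α : MForm ℕ) (k : ℕ), k ≤ m →
      ((∀ x, ¬ F.R (u m) x) ∨ α.depth ≤ m - k) →
      (sat F V (u k) α ↔ psat (fun pj => V (u (m - pj.2)) pj.1) (trAlt (m - k) α)) := by
  intro α
  induction α with
  | top => intro k _ _; simp [sat, trAlt, psat]
  | atom p =>
      intro k hk _
      simp only [sat, trAlt, psat, Nat.sub_sub_self hk]
  | neg φ ih =>
      intro k hk hend
      simp only [sat, trAlt, psat]
      rw [ih k hk hend]
  | and φ ψ ih1 ih2 =>
      intro k hk hend
      simp only [sat, trAlt, psat]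
      rw [ih1 k hk (hend.imp_right fun h => le_trans (le_max_left _ _) h),
          ih2 k hk (hend.imp_right fun h => le_trans (le_max_right _ _) h)]
  | box φ ih =>
      intro k hk hend
      rcases eq_or_lt_of_le hk with rfl | hlt
      · simp only [Nat.sub_self, trAlt, psat, iff_true]
        intro x hx
        rcases hend with hdead | hdep
        · exact absurd hx (hdead x)
        · simp only [MForm.depth, Nat.sub_self] at hdep; omega
      · have hs : m - k = (m - (k + 1)) + 1 := by omega
        rw [hs]
        show sat F V (u k) (MForm.box φ) ↔ psat _ (trAlt (m - (k+1)) φ)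
        rw [← ih (k + 1) hlt (hend.imp_right fun h => by
          simp only [MForm.depth] at h; omega)]
        constructor
        · intro h; exact h _ (hu k hlt)
        · intro h x hx
          have : x = u (k + 1) := hF _ _ _ hx (hu k hlt)
          rw [this]; exact h

lemma sat_diaIter_iff (F : Frame) (hF : ∀ w v v' : F.W, F.R w v → F.R w v' → v = v')
    (V : F.W → ℕ → Prop) :
    ∀ (t : ℕ) (u : ℕ → F.W) (α : MForm ℕ), (∀ k < t, F.R (u k) (u (k + 1))) →
      (sat F V (u 0) (diaIter t α) ↔ sat F V (u t) α) := by
  intro t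
  induction t with
  | zero => intro u α _; rfl
  | succ t ih =>
      intro u α hu
      have h1 : sat F V (u 0) (MForm.dia (diaIter t α)) ↔ sat F V (u 1) (diaIter t α) := by
        rw [sat_dia]
        constructor
        · rintro ⟨x, hx, h⟩
          rwa [hF _ _ _ hx (hu 0 (by omega))] at h
        · intro h; exact ⟨u 1, hu 0 (by omega), h⟩
      have h2 := ih (fun k => u (k + 1)) α (fun k hk => hu (k + 1) (by omega))
      exact h1.trans h2

lemma diaIter_follow (F : Frame) (hF : ∀ w v v' : F.W, F.R w v → F.R w v' → v = v')
    (V : F.W → ℕ → Prop) :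
    ∀ (t : ℕ) (u : ℕ → F.W) (α : MForm ℕ),
      (∀ k, (∃ x, F.R (u k) x) → F.R (u k) (u (k + 1))) →
      sat F V (u 0) (diaIter t α) →
      (∀ k < t, F.R (u k) (u (k + 1))) ∧ sat F V (u t) α := by
  intro t
  induction t with
  | zero => intro u α _ h; exact ⟨fun k hk => absurd hk (by omega), h⟩
  | succ t ih =>
      intro u α hstep hsat
      rw [show diaIter (t+1) α = MForm.dia (diaIter t α) from rfl, sat_dia] at hsat
      obtain ⟨x, hx, hs⟩ := hsat
      have h01 : F.R (u 0) (u 1) := hstep 0 ⟨x, hx⟩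
      have hx1 : x = u 1 := hF _ _ _ hx h01
      rw [hx1] at hs
      obtain ⟨hchain, hend⟩ := ih (fun k => u (k + 1)) α (fun k => hstep (k + 1)) hs
      refine ⟨fun k hk => ?_, hend⟩
      cases k with
      | zero => exact h01
      | succ k => exact hchain k (by omega)

noncomputable def thePath (F : Frame) (w : F.W) : ℕ → F.W
  | 0 => w
  | k + 1 => if h : ∃ x, F.R (thePath F w k) x then h.choose else thePath F w k

lemma thePath_step (F : Frame) (w : F.W) (k : ℕ) (h : ∃ x, F.R (thePath F w k) x) :
    F.R (thePath F w k) (thePath F w (k + 1)) := by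
  show F.R _ (if h : ∃ x, F.R (thePath F w k) x then h.choose else thePath F w k)
  rw [dif_pos h]
  exact h.choose_spec

lemma sat_backSub (F : Frame) (hF : ∀ w v v' : F.W, F.R w v → F.R w v' → v = v')
    (V : F.W → ℕ → Prop) (u : ℕ → F.W) (i : ℕ)
    (hu : ∀ k < i, F.R (u k) (u (k + 1))) :
    ∀ ψ : MForm (ℕ × ℕ), ψ.IsProp →
      (sat F V (u 0) (backSub i ψ) ↔ psat (fun pj => V (u (i - pj.2)) pj.1) ψ) := by
  intro ψ hψ
  induction ψ with
  | top => simp [backSub, substAtoms, sat, psat]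
  | atom a =>
      show sat F V (u 0) (diaIter (i - a.2) (MForm.atom a.1)) ↔ _
      rw [sat_diaIter_iff F hF V (i - a.2) u _ (fun k hk => hu k (by omega))]
      rfl
  | neg φ ih =>
      simp only [backSub, substAtoms, sat, psat] at *
      rw [ih hψ]
  | and φ ψ ih1 ih2 =>
      simp only [backSub, substAtoms, sat, psat] at *
      rw [ih1 hψ.1, ih2 hψ.2]
  | box φ _ => exact absurd hψ (by simp [MForm.IsProp])

lemma exists_agree {σ' : Finset (ℕ × ℕ)} {χ ξ : MForm (ℕ × ℕ)}
    (h : UPropInt σ' χ ξ) (S : Finset (ℕ × ℕ))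
    (hS : ∀ a ∈ S, a ∈ χ.sig → a ∈ σ')
    (v : ℕ × ℕ → Prop) (hv : psat v ξ) :
    ∃ v' : ℕ × ℕ → Prop, psat v' χ ∧ ∀ a ∈ S, (v' a ↔ v a) := by
  by_contra hc
  push_neg at hc
  set lit : ℕ × ℕ → MForm (ℕ × ℕ) := fun a => if v a then MForm.atom a else MForm.neg (MForm.atom a) with hlit
  set ψv : MForm (ℕ × ℕ) := bigAnd (S.toList.map lit) with hψv
  have hlitsat : ∀ (v' : ℕ × ℕ → Prop) (a : ℕ × ℕ), psat v' (lit a) ↔ (v' a ↔ v a) := by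
    intro v' a
    by_cases hva : v a
    · simp only [hlit, if_pos hva, psat]; tauto
    · simp only [hlit, if_neg hva, psat]; tauto
  have h1 : PTaut (χ.imp (MForm.neg ψv)) := by
    intro v'
    rw [psat_imp]
    intro hχ'
    obtain ⟨a, haS, hna⟩ := hc v' hχ'
    show ¬ psat v' ψv
    intro hall
    rw [hψv, psat_bigAnd] at hall
    have := hall (lit a) (List.mem_map_of_mem (f := lit) (by simpa using haS))
    have h5 := (hlitsat v' a).1 this
    tauto
  have hprop : (MForm.neg ψv).IsProp := by
    show ψv.IsProp
    refine isProp_bigAnd ?_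
    intro φ hφ
    simp only [List.mem_map] at hφ
    obtain ⟨a, _, rfl⟩ := hφ
    by_cases hva : v a <;> simp [hlit, hva, MForm.IsProp]
  have hsig : (MForm.neg ψv).sig ∩ χ.sig ⊆ σ' := by
    intro a ha
    rw [Finset.mem_inter] at ha
    have haS : a ∈ S := by
      have : (MForm.neg ψv).sig ⊆ S := by
        show ψv.sig ⊆ S
        refine sig_bigAnd_subset ?_
        intro φ hφ
        simp only [List.mem_map] at hφ
        obtain ⟨b, hb, rfl⟩ := hφ
        have hbS : b ∈ S := by simpa using hb
        by_cases hvb : v b <;> simp [hlit, hvb, MForm.sig, Finset.singleton_subset_iff, hbS]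
      exact this ha.1
    exact hS a haS ha.2
  have h2 := h.2.2.2 (MForm.neg ψv) hprop hsig h1
  have h3 := psat_imp.1 (h2 v) hv
  apply h3
  rw [hψv, psat_bigAnd]
  intro φ hφ
  simp only [List.mem_map] at hφ
  obtain ⟨a, _, rfl⟩ := hφ
  exact (hlitsat v a).2 Iff.rfl

def pathFrame (L : Bool) (m : ℕ) : Frame :=
  ⟨ℕ, ⟨0⟩, fun a b => match L with
    | true => b = min (a + 1) m
    | false => a < m ∧ b = a + 1⟩

lemma pathFrame_fun (L : Bool) (m : ℕ) :
    ∀ w v v' : (pathFrame L m).W, (pathFrame L m).R w v → (pathFrame L m).R w v' → v = v' := by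
  show ∀ w v v' : ℕ, _
  intro w v v'
  cases L
  · intro h1 h2; exact Eq.trans h1.2 h2.2.symm
  · intro h1 h2
    have h1' : v = min (w + 1) m := h1
    have h2' : v' = min (w + 1) m := h2
    exact h1'.trans h2'.symm

lemma pathFrame_chain (L : Bool) (m : ℕ) :
    ∀ k, k < m → (pathFrame L m).R (min k m : ℕ) (min (k + 1) m : ℕ) := by
  intro k hk
  cases L
  · exact ⟨by omega, by omega⟩
  · show (min (k + 1) m : ℕ) = min (min k m + 1) m
    omega

lemma pathFrame_dead (m : ℕ) : ∀ x : ℕ, ¬ (pathFrame false m).R (min m m : ℕ) x := by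
  intro x h
  have : (min m m : ℕ) < m := h.1
  omega

end Aux2


section Core

lemma sig_backSub (i : ℕ) (ψ : MForm (ℕ × ℕ)) :
    (backSub i ψ).sig ⊆ ψ.sig.image Prod.fst := by
  induction ψ with
  | top => simp [backSub, substAtoms, MForm.sig]
  | atom a =>
      show (diaIter (i - a.2) (MForm.atom a.1)).sig ⊆ _
      rw [sig_diaIter]
      simp [MForm.sig]
  | neg φ ih => simpa [backSub, substAtoms, MForm.sig] using ih
  | and φ ψ ih1 ih2 =>
      show (backSub i φ).sig ∪ (backSub i ψ).sig ⊆ (φ.sig ∪ ψ.sig).image Prod.fst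
      rw [Finset.image_union]
      exact Finset.union_subset
        (ih1.trans (Finset.subset_union_left))
        (ih2.trans (Finset.subset_union_right))
  | box φ ih => simpa [backSub, substAtoms, MForm.sig] using ih

lemma core (τ : Finset ℕ) (φ : MForm ℕ) (n : ℕ) (hn : φ.depth = n)
    (Ψ : ℕ → MForm (ℕ × ℕ)) (χ : MForm ℕ)
    (hχsig : χ.sig ∩ φ.sig ⊆ τ) (hχA : φ.imp χ ∈ Alt1)
    (F : Frame) (hF : ∀ w v v' : F.W, F.R w v → F.R w v' → v = v')
    (V : F.W → ℕ → Prop) (u : ℕ → F.W)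
    (m i : ℕ) (him : i ≤ m)
    (hu : ∀ k, k < m → F.R (u k) (u (k + 1)))
    (hend : (∀ x, ¬ F.R (u m) x) ∨ χ.depth ≤ m)
    (L : Bool) (hL : L = true → χ.depth ≤ m ∧ φ.depth ≤ m)
    (hi : i = m ∨ φ.depth ≤ i)
    (hΨi : UPropInt (τ ×ˢ Finset.range (i + 1)) (trAlt i φ) (Ψ i))
    (hv : psat (fun pj => V (u (i - pj.2)) pj.1) (Ψ i)) :
    sat F V (u 0) χ := by
  classical
  set S : Finset (ℕ × ℕ) :=
    (τ ×ˢ Finset.range (i + 1)) ∪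
      ((trAlt m χ).sig.image (fun a => (a.1, a.2 - (m - i))) \ (trAlt i φ).sig) with hSdef
  have hS : ∀ a ∈ S, a ∈ (trAlt i φ).sig → a ∈ τ ×ˢ Finset.range (i + 1) := by
    intro a ha hmem
    rw [hSdef, Finset.mem_union] at ha
    rcases ha with h | h
    · exact h
    · exact absurd hmem (Finset.mem_sdiff.1 h).2
  obtain ⟨v', hv'φ, hv'S⟩ := exists_agree hΨi S hS (fun pj => V (u (i - pj.2)) pj.1) hv
  -- the derived model
  set V' : ℕ → ℕ → Prop := fun k p => if k ≤ i then v' (p, i - k) else V (u k) p with hV'def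
  have hend'φ : (∀ x : ℕ, ¬ (pathFrame L m).R ((fun k => (min k m : ℕ)) m) x) ∨
      φ.depth ≤ m - 0 := by
    cases L with
    | false => exact Or.inl (pathFrame_dead m)
    | true => exact Or.inr (by simpa using (hL rfl).2)
  have hend'χ : (∀ x : ℕ, ¬ (pathFrame L m).R ((fun k => (min k m : ℕ)) m) x) ∨
      χ.depth ≤ m - 0 := by
    cases L with
    | false => exact Or.inl (pathFrame_dead m)
    | true => exact Or.inr (by simpa using (hL rfl).1)
  have hsatφ' : sat (pathFrame L m) V' ((fun k => (min k m : ℕ)) 0) φ := by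
    have htl := TL (pathFrame L m) (pathFrame_fun L m) V' (fun k => (min k m : ℕ)) m
      (pathFrame_chain L m) φ 0 (Nat.zero_le m) hend'φ
    rw [Nat.sub_zero] at htl
    apply htl.2
    rw [trAlt_shift φ i m hi him, psat_substAtoms]
    refine (psat_congr (v' := v') ?_).2 hv'φ
    intro a ha
    have hj : a.2 ≤ i := by
      have := sig_trAlt φ i ha
      rw [Finset.mem_product, Finset.mem_range] at this
      omega
    show V' (min (m - (a.2 + (m - i))) m) a.1 ↔ v' a
    have e1 : (min (m - (a.2 + (m - i))) m : ℕ) = i - a.2 := by omega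
    rw [e1, hV'def]
    simp only [if_pos (Nat.sub_le i a.2), Nat.sub_sub_self hj]
  have hsatχ' : sat (pathFrame L m) V' ((fun k => (min k m : ℕ)) 0) χ := by
    have hval := hχA (pathFrame L m) (pathFrame_fun L m) ((fun k => (min k m : ℕ)) 0) V'
    exact sat_imp.1 hval hsatφ'
  have hχ'ps : psat (fun pj => V' (min (m - pj.2) m) pj.1) (trAlt m χ) := by
    have htl := TL (pathFrame L m) (pathFrame_fun L m) V' (fun k => (min k m : ℕ)) m
      (pathFrame_chain L m) χ 0 (Nat.zero_le m) hend'χ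
    rw [Nat.sub_zero] at htl
    exact htl.1 hsatχ'
  have htlM := TL F hF V u m hu χ 0 (Nat.zero_le m)
    (hend.imp_right (fun h => by omega))
  rw [Nat.sub_zero] at htlM
  apply htlM.2
  refine (psat_congr ?_).1 hχ'ps
  rintro ⟨p, j⟩ ha
  have hpχ : p ∈ χ.sig ∧ j ≤ m := by
    have := sig_trAlt χ m ha
    rw [Finset.mem_product, Finset.mem_range] at this
    exact ⟨this.1, by omega⟩
  show V' (min (m - j) m) p ↔ V (u (m - j)) p
  rw [min_eq_left (Nat.sub_le m j)]
  simp only [hV'def]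
  by_cases hcase : m - j ≤ i
  · rw [if_pos hcase]
    have hSmem : (p, i - (m - j)) ∈ S := by
      by_cases hmemφ : (p, i - (m - j)) ∈ (trAlt i φ).sig
      · have hpφ : p ∈ φ.sig := by
          have := sig_trAlt φ i hmemφ
          rw [Finset.mem_product] at this
          exact this.1
        apply Finset.mem_union_left
        rw [Finset.mem_product, Finset.mem_range]
        exact ⟨hχsig (Finset.mem_inter.2 ⟨hpχ.1, hpφ⟩), by omega⟩
      · apply Finset.mem_union_right
        rw [Finset.mem_sdiff]
        refine ⟨Finset.mem_image.2 ⟨(p, j), ha, ?_⟩, hmemφ⟩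
        have : j - (m - i) = i - (m - j) := by omega
        simp [this]
    rw [hv'S _ hSmem]
    show V (u (i - (i - (m - j)))) p ↔ V (u (m - j)) p
    rw [Nat.sub_sub_self hcase]
  · rw [if_neg hcase]

end Core

/-- if `φ ∈ ML(σ)` has modal depth `n`, `τ ⊆ σ`, and for each `0 ≤ i ≤ n`
the formula `Ψ i` is a uniform propositional `(τ×{0,…,i})`-interpolant for `tr_i(φ)`, then
`⋀_{0≤i≤n-1} (◇^i□⊥ → Ψ_i[p_j ↦ ◇^{i-j} p]) ∧ (◇^n⊤ → Ψ_n[p_j ↦ ◇^{n-j} p])`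
is a uniform `Alt₁(τ)`-interpolant for `φ`. -/
theorem stmt19 (σ τ : Finset ℕ) (hτ : τ ⊆ σ)
    (φ : MForm ℕ) (hφ : φ.sig ⊆ σ) (n : ℕ) (hn : φ.depth = n)
    (Ψ : ℕ → MForm (ℕ × ℕ))
    (hΨ : ∀ i ≤ n, UPropInt (τ ×ˢ Finset.range (i + 1)) (trAlt i φ) (Ψ i)) :
    UnifInt Alt1 τ φ (altInterpolant n Ψ) := by
  classical
  have hsigback : ∀ i ≤ n, (backSub i (Ψ i)).sig ⊆ τ := by
    intro i hi
    refine (sig_backSub i (Ψ i)).trans ?_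
    intro p hp
    rw [Finset.mem_image] at hp
    obtain ⟨a, ha, rfl⟩ := hp
    have := (hΨ i hi).2.1 ha
    rw [Finset.mem_product] at this
    exact this.1
  refine ⟨?_, ?_, ?_⟩
  · -- signature
    show (MForm.and _ _).sig ⊆ τ
    simp only [MForm.sig, Finset.union_subset_iff]
    constructor
    · refine sig_bigAnd_subset ?_
      intro θ hθ
      simp only [List.mem_map, List.mem_range] at hθ
      obtain ⟨i, hin, rfl⟩ := hθ
      show (diaIter i (MForm.box (MForm.neg MForm.top))).sig ∪ (backSub i (Ψ i)).sig ⊆ τ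
      rw [sig_diaIter]
      refine Finset.union_subset ?_ (hsigback i (by omega))
      simp [MForm.sig]
    · show (diaIter n MForm.top).sig ∪ (backSub n (Ψ n)).sig ⊆ τ
      refine Finset.union_subset_iff.2 ⟨?_, hsigback n le_rfl⟩
      rw [sig_diaIter]
      intro a ha
      simp [MForm.sig] at ha
  · -- φ → interpolant is valid
    intro F hFfun w V
    rw [sat_imp]
    intro hsφ
    refine ⟨?_, ?_⟩
    · rw [sat_bigAnd]
      intro θ hθ
      simp only [List.mem_map, List.mem_range] at hθ
      obtain ⟨i, hin, rfl⟩ := hθ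
      rw [sat_imp]
      intro hprem
      obtain ⟨hchain, hdeadsat⟩ := diaIter_follow F hFfun V i (thePath F w)
        (MForm.box (MForm.neg MForm.top)) (fun k => thePath_step F w k) hprem
      have hdead : ∀ x, ¬ F.R (thePath F w i) x := by
        intro x hx
        exact (hdeadsat x hx) trivial
      have htl := TL F hFfun V (thePath F w) i hchain φ 0 (Nat.zero_le i) (Or.inl hdead)
      rw [Nat.sub_zero] at htl
      have hps := htl.1 hsφ
      have hΨi := hΨ i (by omega)
      have hpsΨ := psat_imp.1 (hΨi.2.2.1 _) hps
      exact (sat_backSub F hFfun V (thePath F w) i hchain (Ψ i) hΨi.1).2 hpsΨ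
    · rw [sat_imp]
      intro hprem
      obtain ⟨hchain, _⟩ := diaIter_follow F hFfun V n (thePath F w)
        MForm.top (fun k => thePath_step F w k) hprem
      have htl := TL F hFfun V (thePath F w) n hchain φ 0 (Nat.zero_le n)
        (Or.inr (by omega))
      rw [Nat.sub_zero] at htl
      have hps := htl.1 hsφ
      have hΨn := hΨ n le_rfl
      have hpsΨ := psat_imp.1 (hΨn.2.2.1 _) hps
      exact (sat_backSub F hFfun V (thePath F w) n hchain (Ψ n) hΨn.1).2 hpsΨ
  · -- the uniform interpolation property
    intro χ hsig hA
    intro F hFfun w V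
    rw [sat_imp]
    intro hsψ
    have hs1 : sat F V w (bigAnd ((List.range n).map (fun i =>
      MForm.imp (diaIter i (.box (.neg .top))) (backSub i (Ψ i))))) := hsψ.1
    have hs2 : sat F V w (MForm.imp (diaIter n .top) (backSub n (Ψ n))) := hsψ.2
    by_cases hinf : ∀ k, ∃ x, F.R (thePath F w k) x
    · have hchain : ∀ k, F.R (thePath F w k) (thePath F w (k + 1)) :=
        fun k => thePath_step F w k (hinf k)
      have hpremn : sat F V w (diaIter n MForm.top) :=
        (sat_diaIter_iff F hFfun V n (thePath F w) MForm.top (fun k _ => hchain k)).2 trivial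
      have hback := sat_imp.1 hs2 hpremn
      have hΨn := hΨ n le_rfl
      have hv := (sat_backSub F hFfun V (thePath F w) n (fun k _ => hchain k) (Ψ n) hΨn.1).1 hback
      exact core τ φ n hn Ψ χ hsig hA F hFfun V (thePath F w) (max n χ.depth) n
        (le_max_left _ _) (fun k _ => hchain k) (Or.inr (le_max_right _ _)) true
        (fun _ => ⟨le_max_right _ _, by omega⟩) (Or.inr (by omega)) hΨn hv
    · push_neg at hinf
      have hinf' : ∃ k, ∀ x, ¬ F.R (thePath F w k) x := hinf
      set m := Nat.find hinf' with hm
      have hdead : ∀ x, ¬ F.R (thePath F w m) x := Nat.find_spec hinf'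
      have hchain : ∀ k, k < m → F.R (thePath F w k) (thePath F w (k + 1)) := by
        intro k hk
        have hmin := Nat.find_min hinf' hk
        push_neg at hmin
        exact thePath_step F w k hmin
      by_cases hmn : m < n
      · have hmem : (MForm.imp (diaIter m (.box (.neg .top))) (backSub m (Ψ m))) ∈
            (List.range n).map (fun i =>
              MForm.imp (diaIter i (.box (.neg .top))) (backSub i (Ψ i))) := by
          simp only [List.mem_map, List.mem_range]
          exact ⟨m, hmn, rfl⟩
        have hsθ := sat_bigAnd.1 hs1 _ hmem
        have hprem : sat F V w (diaIter m (MForm.box (MForm.neg MForm.top))) := by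
          apply (sat_diaIter_iff F hFfun V m (thePath F w) _ hchain).2
          intro x hx
          exact absurd hx (hdead x)
        have hback := sat_imp.1 hsθ hprem
        have hΨm := hΨ m (by omega)
        have hv := (sat_backSub F hFfun V (thePath F w) m hchain (Ψ m) hΨm.1).1 hback
        exact core τ φ n hn Ψ χ hsig hA F hFfun V (thePath F w) m m le_rfl hchain
          (Or.inl hdead) false (by simp) (Or.inl rfl) hΨm hv
      · have hnm : n ≤ m := by omega
        have hpremn : sat F V w (diaIter n MForm.top) :=
          (sat_diaIter_iff F hFfun V n (thePath F w) MForm.top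
            (fun k hk => hchain k (by omega))).2 trivial
        have hback := sat_imp.1 hs2 hpremn
        have hΨn := hΨ n le_rfl
        have hv := (sat_backSub F hFfun V (thePath F w) n
          (fun k hk => hchain k (by omega)) (Ψ n) hΨn.1).1 hback
        exact core τ φ n hn Ψ χ hsig hA F hFfun V (thePath F w) m n hnm hchain
          (Or.inl hdead) false (by simp) (Or.inr (by omega)) hΨn hv
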